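/- Let μ, σ ∈ ℝ with μ ≠ 0 and σ ≠ 0 (normal parameters). Set ē := -(μ/σ²) + (μ/σ²)·( (1+X)^{1/2} ∘ ( 2·(σ/μ)²·L ) ) ∈ ℝ⟦X⟧ (this series has zero constant coefficient). Then for all natural numbers n ≥ k: c_n( ē^k / k! ) = (1/k!)·(-μ/σ²)^k·Σ_{j=0}^{k} Σ_{l=0}^{n} (-1)^j·binom(k,j)·(j/2)_l·2^l·(σ/μ)^{2l}·S₁(n,l). -/

import Mathlib

open PowerSeries Finset

noncomputable section

/-- `cN n F = n! * (coefficient of X^n in F)`. -/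
def cN (n : ℕ) (F : PowerSeries ℝ) : ℝ := (n.factorial : ℝ) * PowerSeries.coeff (R := ℝ) n F

/-- Formal substitution `F ∘ G` (faithful when `G` has zero constant coefficient). -/
def pcomp (F G : PowerSeries ℝ) : PowerSeries ℝ :=
  PowerSeries.mk fun n =>
    ∑ k ∈ Finset.range (n + 1), (PowerSeries.coeff (R := ℝ) k F) * (PowerSeries.coeff (R := ℝ) n (G ^ k))

/-- The formal series of log(1+X). -/
def L : PowerSeries ℝ := PowerSeries.mk fun n => if n = 0 then 0 else (-1 : ℝ) ^ (n - 1) / n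

/-- Falling factorial `(y)_m`. -/
def ff (y : ℝ) (m : ℕ) : ℝ := ∏ i ∈ Finset.range m, (y - i)

/-- Rising factorial `⟨y⟩_m`. -/
def rf (y : ℝ) (m : ℕ) : ℝ := ∏ i ∈ Finset.range m, (y + i)

/-- Degenerate falling factorial `(x)_{n,λ}`. -/
def ffl (x : ℝ) (n : ℕ) (lam : ℝ) : ℝ := ∏ i ∈ Finset.range n, (x - i * lam)

/-- Stirling numbers of the second kind. -/
def S2 (n k : ℕ) : ℝ :=
  (k.factorial : ℝ)⁻¹ * ∑ j ∈ Finset.range (k + 1), (-1 : ℝ) ^ (k - j) * (k.choose j) * (j : ℝ) ^ n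

/-- The falling factorial polynomial `x(x-1)⋯(x-n+1)`. -/
def fallingPoly (n : ℕ) : Polynomial ℝ := ∏ i ∈ Finset.range n, (Polynomial.X - Polynomial.C (i : ℝ))

/-- (Signed) Stirling numbers of the first kind. -/
def S1 (n k : ℕ) : ℝ := (fallingPoly n).coeff k

/-- Degenerate Stirling numbers of the second kind. -/
def S2d (lam : ℝ) (n k : ℕ) : ℝ :=
  (k.factorial : ℝ)⁻¹ *
    ∑ j ∈ Finset.range (k + 1), (-1 : ℝ) ^ (k - j) * (k.choose j) * ffl (j : ℝ) n lam

/-- Formal degenerate exponential `e_λ`. -/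
def degExp (lam : ℝ) : PowerSeries ℝ := PowerSeries.mk fun n => ffl 1 n lam / n.factorial

/-- Formal degenerate logarithm `Λ_λ` of `1+X`. -/
def degLog (lam : ℝ) : PowerSeries ℝ :=
  lam⁻¹ • PowerSeries.mk fun n => if n = 0 then 0 else ff lam n / n.factorial

/-- Degenerate Stirling numbers of the first kind. -/
def S1d (lam : ℝ) (n k : ℕ) : ℝ := cN n ((k.factorial : ℝ)⁻¹ • (degLog lam) ^ k)

/-- Binomial series `(1+X)^c`. -/
def binser (c : ℝ) : PowerSeries ℝ := PowerSeries.mk fun n => ff c n / n.factorial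

/-- Frobenius–Euler numbers of order `j`. -/
def FE (u : ℝ) (j n : ℕ) : ℝ :=
  cN n (((1 - u) • (PowerSeries.exp ℝ - PowerSeries.C (R := ℝ) u)⁻¹) ^ j)

lemma ff_eq_smeval (y : ℝ) (m : ℕ) : ff y m = (descPochhammer ℤ m).smeval y := by
  induction m with
  | zero => simp [ff]
  | succ m ih =>
    rw [ff, Finset.prod_range_succ, ← ff, ih, descPochhammer_succ_right,
      Polynomial.smeval_mul, Polynomial.smeval_sub, Polynomial.smeval_X,
      Polynomial.smeval_natCast]
    simp

lemma ff_add (a b : ℝ) (m : ℕ) :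
    ff (a + b) m = ∑ ij ∈ antidiagonal m, (m.choose ij.1 : ℝ) * (ff a ij.1 * ff b ij.2) := by
  simp only [ff_eq_smeval]
  exact_mod_cast Ring.descPochhammer_smeval_add m (Commute.all a b)

lemma coeff_pow_eq_zero {G : PowerSeries ℝ} (hG : constantCoeff (R := ℝ) G = 0)
    {n s : ℕ} (h : n < s) : PowerSeries.coeff (R := ℝ) n (G ^ s) = 0 := by
  have hX : (X : PowerSeries ℝ) ^ s ∣ G ^ s := pow_dvd_pow_of_dvd (X_dvd_iff.mpr hG) s
  exact (X_pow_dvd_iff.mp hX) n h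

lemma coeff_pcomp (F G : PowerSeries ℝ) (n : ℕ) :
    PowerSeries.coeff (R := ℝ) n (pcomp F G) =
      ∑ k ∈ Finset.range (n + 1), (PowerSeries.coeff (R := ℝ) k F) * (PowerSeries.coeff (R := ℝ) n (G ^ k)) := by
  simp [pcomp]

lemma coeff_pcomp' {G : PowerSeries ℝ} (hG : constantCoeff (R := ℝ) G = 0) (F : PowerSeries ℝ)
    {n N : ℕ} (h : n ≤ N) :
    PowerSeries.coeff (R := ℝ) n (pcomp F G) =
      ∑ k ∈ Finset.range (N + 1), (PowerSeries.coeff (R := ℝ) k F) * (PowerSeries.coeff (R := ℝ) n (G ^ k)) := by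
  rw [coeff_pcomp]
  refine Finset.sum_subset ?_ ?_
  · exact Finset.range_subset_range.mpr (by omega)
  · intro k hk hk'
    simp only [Finset.mem_range] at hk hk'
    rw [coeff_pow_eq_zero hG (by omega), mul_zero]

lemma pcomp_mul {G : PowerSeries ℝ} (hG : constantCoeff (R := ℝ) G = 0) (F1 F2 : PowerSeries ℝ) :
    pcomp F1 G * pcomp F2 G = pcomp (F1 * F2) G := by
  ext n
  rw [PowerSeries.coeff_mul, coeff_pcomp]
  have hL : ∀ p ∈ antidiagonal n,
      (PowerSeries.coeff (R := ℝ) p.1 (pcomp F1 G)) * (PowerSeries.coeff (R := ℝ) p.2 (pcomp F2 G)) =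
      ∑ k ∈ Finset.range (n+1), ∑ m ∈ Finset.range (n+1),
        (PowerSeries.coeff (R := ℝ) k F1 * PowerSeries.coeff (R := ℝ) m F2) *
          (PowerSeries.coeff (R := ℝ) p.1 (G^k) * PowerSeries.coeff (R := ℝ) p.2 (G^m)) := by
    intro p hp
    rw [Finset.HasAntidiagonal.mem_antidiagonal] at hp
    rw [coeff_pcomp' hG F1 (show p.1 ≤ n by omega), coeff_pcomp' hG F2 (show p.2 ≤ n by omega),
      Finset.sum_mul_sum]
    apply Finset.sum_congr rfl; intro k _; apply Finset.sum_congr rfl; intro m _; ring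
  rw [Finset.sum_congr rfl hL, Finset.sum_comm]
  have : ∀ k ∈ Finset.range (n+1),
      (∑ p ∈ antidiagonal n, ∑ m ∈ Finset.range (n+1),
        (PowerSeries.coeff (R := ℝ) k F1 * PowerSeries.coeff (R := ℝ) m F2) *
          (PowerSeries.coeff (R := ℝ) p.1 (G^k) * PowerSeries.coeff (R := ℝ) p.2 (G^m)))
      = ∑ m ∈ Finset.range (n+1),
          (PowerSeries.coeff (R := ℝ) k F1 * PowerSeries.coeff (R := ℝ) m F2) *
            PowerSeries.coeff (R := ℝ) n (G^(k+m)) := by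
    intro k _
    rw [Finset.sum_comm]
    refine Finset.sum_congr rfl fun m _ => ?_
    rw [← Finset.mul_sum, pow_add, PowerSeries.coeff_mul]
  rw [Finset.sum_congr rfl this]
  -- now: ∑_{k,m ∈ box} a_k b_m c_{k+m} = ∑_{s ≤ n} (coeff s (F1*F2)) c_s
  have hbox : ∑ k ∈ Finset.range (n+1), ∑ m ∈ Finset.range (n+1),
      (PowerSeries.coeff (R := ℝ) k F1 * PowerSeries.coeff (R := ℝ) m F2) *
        PowerSeries.coeff (R := ℝ) n (G^(k+m))
      = ∑ p ∈ (Finset.range (n+1) ×ˢ Finset.range (n+1)).filter (fun p => p.1 + p.2 ≤ n),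
          (PowerSeries.coeff (R := ℝ) p.1 F1 * PowerSeries.coeff (R := ℝ) p.2 F2) *
            PowerSeries.coeff (R := ℝ) n (G^(p.1+p.2)) := by
    rw [← Finset.sum_product']
    refine (Finset.sum_subset (Finset.filter_subset _ _) ?_).symm
    intro p _ hp
    simp only [Finset.mem_filter, not_and, not_le] at hp
    rcases lt_or_ge n (p.1 + p.2) with h | h
    · rw [coeff_pow_eq_zero hG h, mul_zero]
    · exact absurd h (by
        intro hh
        have := hp (by
          simp only [Finset.mem_product, Finset.mem_range]
          constructor <;> omega)
        omega)
  rw [hbox]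
  have hrhs : ∑ k ∈ Finset.range (n+1),
      PowerSeries.coeff (R := ℝ) k (F1 * F2) * PowerSeries.coeff (R := ℝ) n (G ^ k)
      = ∑ k ∈ Finset.range (n+1), ∑ p ∈ antidiagonal k,
          (PowerSeries.coeff (R := ℝ) p.1 F1 * PowerSeries.coeff (R := ℝ) p.2 F2) *
            PowerSeries.coeff (R := ℝ) n (G^(p.1+p.2)) := by
    refine Finset.sum_congr rfl fun s hs => ?_
    rw [PowerSeries.coeff_mul, Finset.sum_mul]
    refine Finset.sum_congr rfl fun p hp => ?_
    rw [Finset.HasAntidiagonal.mem_antidiagonal] at hp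
    rw [hp]
  rw [hrhs]
  conv_rhs => rw [Finset.sum_sigma']
  refine Finset.sum_nbij' (fun p => ⟨p.1 + p.2, p⟩) (fun x => x.2) ?_ ?_ ?_ ?_ ?_
  · intro p hp
    simp only [Finset.mem_filter, Finset.mem_product, Finset.mem_range] at hp
    simp only [Finset.mem_sigma, Finset.mem_range, Finset.HasAntidiagonal.mem_antidiagonal]
    exact ⟨by omega, by simp⟩
  · intro x hx
    simp only [Finset.mem_sigma, Finset.mem_range, Finset.HasAntidiagonal.mem_antidiagonal] at hx
    simp only [Finset.mem_filter, Finset.mem_product, Finset.mem_range]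
    obtain ⟨h1, h2⟩ := hx
    exact ⟨⟨by omega, by omega⟩, by omega⟩
  · intro p _; rfl
  · intro x hx
    simp only [Finset.mem_sigma, Finset.mem_range, Finset.HasAntidiagonal.mem_antidiagonal] at hx
    exact Sigma.ext hx.2 (by simp)
  · intro p _; rfl

lemma binser_mul (c1 c2 : ℝ) : binser c1 * binser c2 = binser (c1 + c2) := by
  ext n
  rw [PowerSeries.coeff_mul]
  have : PowerSeries.coeff (R := ℝ) n (binser (c1 + c2)) = ff (c1 + c2) n / n.factorial := by
    simp [binser]
  rw [this, ff_add, Finset.sum_div]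
  refine Finset.sum_congr rfl fun p hp => ?_
  rw [Finset.HasAntidiagonal.mem_antidiagonal] at hp
  have h1 : p.1 ≤ n := by omega
  have hfacN := Nat.choose_mul_factorial_mul_factorial h1
  rw [show n - p.1 = p.2 by omega] at hfacN
  have hfac : (n.choose p.1 : ℝ) * p.1.factorial * p.2.factorial = n.factorial := by
    exact_mod_cast congrArg (Nat.cast : ℕ → ℝ) hfacN
  rw [show PowerSeries.coeff (R := ℝ) p.1 (binser c1) = ff c1 p.1 / p.1.factorial from by simp [binser],
    show PowerSeries.coeff (R := ℝ) p.2 (binser c2) = ff c2 p.2 / p.2.factorial from by simp [binser]]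
  have hp1 : (p.1.factorial : ℝ) ≠ 0 := Nat.cast_ne_zero.mpr p.1.factorial_ne_zero
  have hp2 : (p.2.factorial : ℝ) ≠ 0 := Nat.cast_ne_zero.mpr p.2.factorial_ne_zero
  have hn : (n.factorial : ℝ) ≠ 0 := Nat.cast_ne_zero.mpr n.factorial_ne_zero
  field_simp
  linear_combination (-(ff c1 p.1 * ff c2 p.2)) * hfac

lemma ff_zero_left (m : ℕ) : ff 0 m = if m = 0 then 1 else 0 := by
  cases m with
  | zero => simp [ff]
  | succ m =>
    simp only [Nat.succ_ne_zero, if_false]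
    apply Finset.prod_eq_zero (Finset.mem_range.mpr (Nat.succ_pos m))
    simp

lemma binser_zero : binser 0 = 1 := by
  ext n
  simp only [binser, PowerSeries.coeff_mk, ff_zero_left, PowerSeries.coeff_one]
  split_ifs with h <;> simp [h]

lemma pcomp_one (G : PowerSeries ℝ) : pcomp 1 G = 1 := by
  ext n
  rw [coeff_pcomp]
  rw [Finset.sum_eq_single 0]
  · simp
  · intro k _ hk
    rw [PowerSeries.coeff_one, if_neg hk, zero_mul]
  · intro h; simp at h

lemma pcomp_binser_pow {G : PowerSeries ℝ} (hG : constantCoeff (R := ℝ) G = 0) (c : ℝ) (j : ℕ) :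
    (pcomp (binser c) G) ^ j = pcomp (binser (j * c)) G := by
  induction j with
  | zero => simp [binser_zero, pcomp_one]
  | succ j ih =>
    rw [pow_succ, ih, pcomp_mul hG, binser_mul,
      show ((j:ℕ):ℝ) * c + c = (((j+1 : ℕ)):ℝ) * c from by push_cast; ring]

lemma constantCoeff_L : constantCoeff (R := ℝ) L = 0 := by
  rw [← PowerSeries.coeff_zero_eq_constantCoeff_apply]
  simp [L]

lemma one_add_X_mul_dL : (1 + X) * (d⁄dX ℝ L) = 1 := by
  ext n
  rw [add_mul, one_mul, map_add, PowerSeries.coeff_derivative]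
  cases n with
  | zero =>
    simp only [PowerSeries.coeff_one, if_pos rfl]
    have h1 : PowerSeries.coeff (R := ℝ) 0 (X * d⁄dX ℝ L) = 0 := by
      rw [PowerSeries.coeff_zero_eq_constantCoeff_apply, map_mul, PowerSeries.constantCoeff_X,
        zero_mul]
    rw [h1, add_zero]
    simp [L]
  | succ n =>
    rw [PowerSeries.coeff_succ_X_mul, PowerSeries.coeff_derivative]
    simp only [L, PowerSeries.coeff_mk, PowerSeries.coeff_one]
    have h2 : ((n:ℝ) + 1) ≠ 0 := by positivity
    have h3 : ((n:ℝ) + 1 + 1) ≠ 0 := by positivity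
    simp only [Nat.succ_ne_zero, if_false, Nat.add_sub_cancel]
    push_cast
    field_simp
    ring

lemma coeff_X_mul_eq (f : PowerSeries ℝ) (n : ℕ) :
    PowerSeries.coeff (R := ℝ) n (X * f) = if n = 0 then 0 else PowerSeries.coeff (R := ℝ) (n - 1) f := by
  cases n with
  | zero =>
    rw [PowerSeries.coeff_zero_eq_constantCoeff_apply, map_mul, PowerSeries.constantCoeff_X,
      zero_mul]
    simp
  | succ n => rw [PowerSeries.coeff_succ_X_mul]; simp

lemma Lrec (m n : ℕ) :
    ((n : ℝ) + 1) * PowerSeries.coeff (R := ℝ) (n + 1) (L ^ (m + 1)) +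
      (n : ℝ) * PowerSeries.coeff (R := ℝ) n (L ^ (m + 1)) =
    ((m : ℝ) + 1) * PowerSeries.coeff (R := ℝ) n (L ^ m) := by
  have hD : (1 + X) * (d⁄dX ℝ (L ^ (m + 1))) = ((m : ℝ) + 1) • (L ^ m) := by
    rw [Derivation.leibniz_pow, smul_eq_mul, Nat.add_sub_cancel, mul_smul_comm,
      show (1 + X) * (L ^ m * d⁄dX ℝ L) = L ^ m * ((1 + X) * d⁄dX ℝ L) by ring,
      one_add_X_mul_dL, mul_one, ← Nat.cast_smul_eq_nsmul ℝ]
    push_cast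
    rfl
  have := congrArg (PowerSeries.coeff (R := ℝ) n) hD
  rw [add_mul, one_mul, map_add, PowerSeries.coeff_derivative, coeff_X_mul_eq,
    PowerSeries.coeff_smul, smul_eq_mul] at this
  cases n with
  | zero =>
    simpa using this
  | succ n =>
    simp only [Nat.succ_ne_zero, if_false, Nat.add_sub_cancel, PowerSeries.coeff_derivative]
      at this
    push_cast at this ⊢
    linarith [this]

lemma fallingPoly_succ (n : ℕ) :
    fallingPoly (n + 1) = fallingPoly n * (Polynomial.X - Polynomial.C (n : ℝ)) :=
  Finset.prod_range_succ _ _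

lemma S1_succ_succ (n m : ℕ) : S1 (n + 1) (m + 1) = S1 n m - n * S1 n (m + 1) := by
  unfold S1
  rw [fallingPoly_succ, mul_sub, Polynomial.coeff_sub, Polynomial.coeff_mul_X,
    Polynomial.coeff_mul_C]
  ring

lemma S1_succ_zero (n : ℕ) : S1 (n + 1) 0 = 0 := by
  unfold S1
  rw [Polynomial.coeff_zero_eq_eval_zero, fallingPoly, Polynomial.eval_prod]
  apply Finset.prod_eq_zero (Finset.mem_range.mpr (Nat.succ_pos n))
  simp

lemma S1_zero (l : ℕ) : S1 0 l = if l = 0 then 1 else 0 := by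
  unfold S1 fallingPoly
  simp [Polynomial.coeff_one]

lemma L_pow_coeff (n l : ℕ) :
    (n.factorial : ℝ) * PowerSeries.coeff (R := ℝ) n (L ^ l) = (l.factorial : ℝ) * S1 n l := by
  induction n generalizing l with
  | zero =>
    rw [PowerSeries.coeff_zero_eq_constantCoeff_apply, map_pow, constantCoeff_L, S1_zero]
    cases l with
    | zero => simp
    | succ l => simp
  | succ n ih =>
    cases l with
    | zero =>
      simp only [pow_zero, PowerSeries.coeff_one, Nat.succ_ne_zero, if_false, mul_zero,
        S1_succ_zero]
    | succ m =>
      have hrec := Lrec m n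
      have h1 := ih m
      have h2 := ih (m + 1)
      rw [S1_succ_succ]
      have hfac : (((n+1).factorial : ℝ)) = (n.factorial : ℝ) * (n + 1) := by
        rw [Nat.factorial_succ]; push_cast; ring
      have hfacm : (((m+1).factorial : ℝ)) = (m.factorial : ℝ) * (m + 1) := by
        rw [Nat.factorial_succ]; push_cast; ring
      rw [hfac, hfacm]
      -- (n+1)! a_{n+1}(m+1) = n! ((m+1) a_n(m) - n a_n(m+1))
      have key : (n.factorial : ℝ) * (((n:ℝ)+1) * PowerSeries.coeff (R := ℝ) (n+1) (L^(m+1)))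
          = (n.factorial : ℝ) * (((m:ℝ)+1) * PowerSeries.coeff (R := ℝ) n (L^m)
              - (n:ℝ) * PowerSeries.coeff (R := ℝ) n (L^(m+1))) := by
        rw [← hrec]; ring
      push_cast at key h1 h2 hfacm ⊢
      linear_combination key + ((m:ℝ)+1) * h1 - (n:ℝ) * h2 - (n:ℝ) * S1 n (m+1) * hfacm

theorem stmt15 (μ σ : ℝ) (hμ : μ ≠ 0) (hσ : σ ≠ 0) (n k : ℕ) (hkn : k ≤ n) :
    cN n ((k.factorial : ℝ)⁻¹ •
        (PowerSeries.C (R := ℝ) (-(μ / σ ^ 2)) +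
          (μ / σ ^ 2) • pcomp (binser (1 / 2)) ((2 * (σ / μ) ^ 2) • L)) ^ k)
      = (k.factorial : ℝ)⁻¹ * (-(μ / σ ^ 2)) ^ k *
          ∑ j ∈ Finset.range (k + 1), ∑ l ∈ Finset.range (n + 1),
            (-1 : ℝ) ^ j * (k.choose j : ℝ) * ff ((j : ℝ) / 2) l * 2 ^ l *
              (σ / μ) ^ (2 * l) * S1 n l := by
  set a : ℝ := μ / σ ^ 2 with ha
  set G : PowerSeries ℝ := (2 * (σ / μ) ^ 2) • L with hGdef
  have hG : constantCoeff (R := ℝ) G = 0 := by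
    rw [← PowerSeries.coeff_zero_eq_constantCoeff_apply, hGdef, PowerSeries.coeff_smul,
      PowerSeries.coeff_zero_eq_constantCoeff_apply, constantCoeff_L, smul_zero]
  have hn0 : (n.factorial : ℝ) ≠ 0 := Nat.cast_ne_zero.mpr n.factorial_ne_zero
  rw [cN, map_smul, smul_eq_mul]
  rw [add_comm (PowerSeries.C (R := ℝ) (-a)), add_pow, map_sum]
  have hterm : ∀ j ∈ Finset.range (k+1),
      PowerSeries.coeff (R := ℝ) n ((a • pcomp (binser (1/2)) G) ^ j *
          PowerSeries.C (R := ℝ) (-a) ^ (k - j) * (k.choose j : PowerSeries ℝ))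
      = (∑ l ∈ Finset.range (n+1),
          ff ((j:ℝ)/2) l * (2 * (σ/μ)^2)^l * S1 n l / n.factorial)
          * (a^j * (-a)^(k-j) * (k.choose j : ℝ)) := by
    intro j hj
    rw [smul_pow, pcomp_binser_pow hG, ← map_pow, ← map_natCast (PowerSeries.C (R := ℝ)) (k.choose j),
      PowerSeries.coeff_mul_C, PowerSeries.coeff_mul_C, PowerSeries.coeff_smul, smul_eq_mul,
      coeff_pcomp]
    have hl : ∀ l ∈ Finset.range (n+1),
        PowerSeries.coeff (R := ℝ) l (binser ((j:ℝ)*(1/2))) * PowerSeries.coeff (R := ℝ) n (G ^ l)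
        = ff ((j:ℝ)/2) l * (2*(σ/μ)^2)^l * S1 n l / n.factorial := by
      intro l _
      have hl0 : (l.factorial : ℝ) ≠ 0 := Nat.cast_ne_zero.mpr l.factorial_ne_zero
      have hcL : PowerSeries.coeff (R := ℝ) n (L^l) = l.factorial * S1 n l / n.factorial := by
        rw [eq_div_iff hn0, mul_comm]
        exact L_pow_coeff n l
      rw [hGdef, smul_pow, PowerSeries.coeff_smul, smul_eq_mul, hcL,
        show PowerSeries.coeff (R := ℝ) l (binser ((j:ℝ)*(1/2))) = ff ((j:ℝ)*(1/2)) l / l.factorial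
          from by simp [binser],
        show ((j:ℝ)*(1/2)) = (j:ℝ)/2 from by ring]
      field_simp
    rw [Finset.sum_congr rfl hl]
    ring
  rw [Finset.sum_congr rfl hterm]
  have hsign : ∀ j ∈ Finset.range (k+1), a^j * (-a)^(k-j) = (-a)^k * (-1:ℝ)^j := by
    intro j hj
    rw [Finset.mem_range] at hj
    have hjk : j ≤ k := by omega
    rw [neg_pow, neg_pow a k]
    have h1 : (-1:ℝ)^(k-j) = (-1)^k * (-1)^j := by
      have : (-1:ℝ)^(k-j) * (-1)^j = (-1)^k := by rw [← pow_add]; congr 1; omega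
      have h2 : ((-1:ℝ)^j) * ((-1:ℝ)^j) = 1 := by
        rw [← pow_add, ← two_mul, pow_mul]; norm_num
      calc (-1:ℝ)^(k-j) = (-1:ℝ)^(k-j) * ((-1:ℝ)^j * (-1:ℝ)^j) := by rw [h2, mul_one]
        _ = ((-1:ℝ)^(k-j) * (-1)^j) * (-1)^j := by ring
        _ = (-1)^k * (-1)^j := by rw [this]
    rw [h1]
    have h3 : a^j * a^(k-j) = a^k := by rw [← pow_add]; congr 1; omega
    calc a^j * ((-1:ℝ)^k * (-1)^j * a^(k-j)) = ((-1:ℝ)^k) * (a^j * a^(k-j)) * (-1)^j := by ring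
      _ = (-1)^k * a^k * (-1)^j := by rw [h3]
  simp only [Finset.mul_sum, Finset.sum_mul, Finset.sum_div]
  refine Finset.sum_congr rfl fun j hj => ?_
  refine Finset.sum_congr rfl fun l hl => ?_
  rw [show (2*(σ/μ)^2)^l = 2^l * (σ/μ)^(2*l) from by rw [mul_pow, ← pow_mul]]
  have hs := hsign j hj
  rw [hs]
  linear_combination ((k.factorial:ℝ)⁻¹ * (ff ((j:ℝ)/2) l * (2^l * (σ/μ)^(2*l)) * S1 n l) *
    ((-a)^k * (-1:ℝ)^j * (k.choose j : ℝ))) * (mul_inv_cancel₀ hn0)
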